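/- Let L be a symmetric Leibniz algebra over a field F such that the centralizer C_L(x) is a two-sided ideal of L for every x ∈ L. Then L^{(3)} = 0. -/
import Mathlib


/-- The derived series of an algebra: `derSeries br 0 = L` and
`derSeries br (k+1) = span {[u,v] | u, v ∈ derSeries br k}`. -/
def derSeries {F L : Type*} [Field F] [AddCommGroup L] [Module F L]
    (br : L →ₗ[F] L →ₗ[F] L) : ℕ → Submodule F L
  | 0 => ⊤
  | k + 1 => Submodule.span F
      {w : L | ∃ u ∈ derSeries br k, ∃ v ∈ derSeries br k, w = br u v}

namespace Stmt18Aux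

variable {F L : Type*} [Field F] [AddCommGroup L] [Module F L]

theorem der_succ (br : L →ₗ[F] L →ₗ[F] L) (k : ℕ) :
    derSeries br (k + 1) = Submodule.span F
      {w : L | ∃ u ∈ derSeries br k, ∃ v ∈ derSeries br k, w = br u v} := rfl

theorem der_one (br : L →ₗ[F] L →ₗ[F] L) :
    derSeries br 1 = Submodule.span F
      {w : L | ∃ u ∈ derSeries br 0, ∃ v ∈ derSeries br 0, w = br u v} := rfl

theorem mem_der0 (br : L →ₗ[F] L →ₗ[F] L) (a : L) : a ∈ derSeries br 0 := by
  show a ∈ (⊤ : Submodule F L)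
  exact Submodule.mem_top

theorem mem_der1 (br : L →ₗ[F] L →ₗ[F] L) (a b : L) : br a b ∈ derSeries br 1 := by
  rw [der_one]
  exact Submodule.subset_span ⟨a, mem_der0 br a, b, mem_der0 br b, rfl⟩

theorem skew (br : L →ₗ[F] L →ₗ[F] L)
    (hright : ∀ x y z : L, br x (br y z) = br (br x y) z - br (br x z) y)
    (hleft : ∀ x y z : L, br x (br y z) = br (br x y) z + br y (br x z)) :
    ∀ a ∈ derSeries br 1, ∀ b : L, br b a = -br a b := by
  intro a ha
  rw [der_one] at ha
  induction ha using Submodule.span_induction with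
  | mem x hx =>
      obtain ⟨u, -, v, -, rfl⟩ := hx
      intro b
      have h := (hright u b v).symm.trans (hleft u b v)
      rw [sub_eq_add_neg] at h
      exact (add_left_cancel h).symm
  | zero => intro b; simp
  | add x y hx hy ihx ihy =>
      intro b
      simp only [map_add, LinearMap.add_apply]
      rw [ihx b, ihy b]
      abel
  | smul t x hx ih =>
      intro b
      simp only [map_smul, LinearMap.smul_apply]
      rw [ih b, smul_neg]

theorem sq (br : L →ₗ[F] L →ₗ[F] L)
    (hright : ∀ x y z : L, br x (br y z) = br (br x y) z - br (br x z) y)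
    (hleft : ∀ x y z : L, br x (br y z) = br (br x y) z + br y (br x z))
    (hsq : ∀ x y : L, br (br x y) (br x y) = 0) :
    ∀ a ∈ derSeries br 1, br a a = 0 := by
  intro a ha
  rw [der_one] at ha
  induction ha using Submodule.span_induction with
  | mem x hx =>
      obtain ⟨u, -, v, -, rfl⟩ := hx
      exact hsq u v
  | zero => simp
  | add x y hx hy ihx ihy =>
      have hy1 : y ∈ derSeries br 1 := by rw [der_one]; exact hy
      simp only [map_add, LinearMap.add_apply]
      rw [ihx, ihy, skew br hright hleft y hy1 x]
      abel
  | smul t x hx ih =>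
      simp only [map_smul, LinearMap.smul_apply]
      rw [ih, smul_zero, smul_zero]

theorem engel (br : L →ₗ[F] L →ₗ[F] L)
    (hright : ∀ x y z : L, br x (br y z) = br (br x y) z - br (br x z) y)
    (hleft : ∀ x y z : L, br x (br y z) = br (br x y) z + br y (br x z))
    (hsq : ∀ x y : L, br (br x y) (br x y) = 0)
    (hCL : ∀ x y : L, br x y = 0 → br y x = 0 → ∀ a : L,
      (br x (br y a) = 0 ∧ br (br y a) x = 0) ∧
        (br x (br a y) = 0 ∧ br (br a y) x = 0)) :
    ∀ x ∈ derSeries br 1, ∀ c : L, br x (br x c) = 0 := fun x hx c =>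
  ((hCL x x (sq br hright hleft hsq x hx) (sq br hright hleft hsq x hx) c).1).1

theorem epol (br : L →ₗ[F] L →ₗ[F] L)
    (hright : ∀ x y z : L, br x (br y z) = br (br x y) z - br (br x z) y)
    (hleft : ∀ x y z : L, br x (br y z) = br (br x y) z + br y (br x z))
    (hsq : ∀ x y : L, br (br x y) (br x y) = 0)
    (hCL : ∀ x y : L, br x y = 0 → br y x = 0 → ∀ a : L,
      (br x (br y a) = 0 ∧ br (br y a) x = 0) ∧
        (br x (br a y) = 0 ∧ br (br a y) x = 0)) :
    ∀ u ∈ derSeries br 1, ∀ v ∈ derSeries br 1, ∀ c : L,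
      br u (br v c) = -br v (br u c) := by
  intro u hu v hv c
  have h0 := engel br hright hleft hsq hCL (u + v) (add_mem hu hv) c
  simp only [map_add, LinearMap.add_apply] at h0
  rw [engel br hright hleft hsq hCL u hu c, engel br hright hleft hsq hCL v hv c] at h0
  simp only [zero_add, add_zero] at h0
  exact eq_neg_of_add_eq_zero_right h0

theorem lemR1 (br : L →ₗ[F] L →ₗ[F] L)
    (hright : ∀ x y z : L, br x (br y z) = br (br x y) z - br (br x z) y)
    (hleft : ∀ x y z : L, br x (br y z) = br (br x y) z + br y (br x z))
    (hsq : ∀ x y : L, br (br x y) (br x y) = 0)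
    (hCL : ∀ x y : L, br x y = 0 → br y x = 0 → ∀ a : L,
      (br x (br y a) = 0 ∧ br (br y a) x = 0) ∧
        (br x (br a y) = 0 ∧ br (br a y) x = 0)) :
    ∀ u ∈ derSeries br 1, ∀ v ∈ derSeries br 1, ∀ c : L,
      br (br u v) c = br u (br v c) + br u (br v c) := by
  intro u hu v hv c
  have t1 := hright u v c
  rw [skew br hright hleft v hv (br u c), sub_neg_eq_add] at t1
  rw [epol br hright hleft hsq hCL u hu v hv c] at t1
  -- t1 : -br v (br u c) = br (br u v) c + br v (br u c)
  have t2 := eq_sub_of_add_eq t1.symm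
  rw [epol br hright hleft hsq hCL u hu v hv c]
  rw [t2, sub_eq_add_neg]

theorem Hgen (br : L →ₗ[F] L →ₗ[F] L)
    (hright : ∀ x y z : L, br x (br y z) = br (br x y) z - br (br x z) y)
    (hleft : ∀ x y z : L, br x (br y z) = br (br x y) z + br y (br x z))
    (hsq : ∀ x y : L, br (br x y) (br x y) = 0)
    (hCL : ∀ x y : L, br x y = 0 → br y x = 0 → ∀ a : L,
      (br x (br y a) = 0 ∧ br (br y a) x = 0) ∧
        (br x (br a y) = 0 ∧ br (br a y) x = 0)) :
    ∀ u ∈ derSeries br 1, ∀ v ∈ derSeries br 1, ∀ w ∈ derSeries br 1, ∀ z ∈ derSeries br 1,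
      br (br u v) (br w z) = 0 := by
  intro u hu v hv w hw z hz
  have hm : br u v ∈ derSeries br 1 := mem_der1 br u v
  have hn : br w z ∈ derSeries br 1 := mem_der1 br w z
  -- 3H = 0
  have e5 := hright (br u v) w z
  rw [lemR1 br hright hleft hsq hCL (br u v) hm w hw z,
      lemR1 br hright hleft hsq hCL (br u v) hm z hz w,
      skew br hright hleft w hw z] at e5
  simp only [map_neg] at e5
  -- e5 : H = (H + H) - (-H + -H)
  have e7 : -(br (br u v) (br w z) + br (br u v) (br w z) + br (br u v) (br w z)) = 0 := by
    rw [show -(br (br u v) (br w z) + br (br u v) (br w z) + br (br u v) (br w z)) =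
        br (br u v) (br w z) -
          (br (br u v) (br w z) + br (br u v) (br w z) -
            (-br (br u v) (br w z) + -br (br u v) (br w z))) from by abel, ← e5]
    exact sub_self _
  have h3 : br (br u v) (br w z) + br (br u v) (br w z) + br (br u v) (br w z) = 0 :=
    neg_eq_zero.mp e7
  -- 2H = 0
  have p1 := lemR1 br hright hleft hsq hCL u hu v hv (br w z)
  have p2 := lemR1 br hright hleft hsq hCL w hw z hz (br u v)
  have p3 : br w (br z (br u v)) = br u (br v (br w z)) := by
    rw [epol br hright hleft hsq hCL z hz u hu v]
    simp only [map_neg]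
    rw [epol br hright hleft hsq hCL w hw u hu (br z v)]
    simp only [neg_neg]
    rw [skew br hright hleft v hv z]
    simp only [map_neg]
    rw [epol br hright hleft hsq hCL w hw v hv z]
    simp only [map_neg, neg_neg]
  have p4 := skew br hright hleft (br w z) hn (br u v)
  have h2 : br (br u v) (br w z) + br (br u v) (br w z) = 0 := by
    nth_rewrite 2 [p4]
    rw [p2, p3, p1]
    abel
  rw [show br (br u v) (br w z) =
      (br (br u v) (br w z) + br (br u v) (br w z) + br (br u v) (br w z)) -
        (br (br u v) (br w z) + br (br u v) (br w z)) from by abel, h3, h2, sub_zero]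

end Stmt18Aux

/-- A symmetric Leibniz algebra in which every centralizer
`C_L(x) = {y | [x,y] = [y,x] = 0}` is a two-sided ideal satisfies
`L⁽³⁾ = 0`. -/
theorem stmt_18 (F : Type*) [Field F]
    (L : Type*) [AddCommGroup L] [Module F L]
    (br : L →ₗ[F] L →ₗ[F] L)
    (hright : ∀ x y z : L, br x (br y z) = br (br x y) z - br (br x z) y)
    (hleft : ∀ x y z : L, br x (br y z) = br (br x y) z + br y (br x z))
    (hsq : ∀ x y : L, br (br x y) (br x y) = 0)
    (hCL : ∀ x y : L, br x y = 0 → br y x = 0 → ∀ a : L,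
      (br x (br y a) = 0 ∧ br (br y a) x = 0) ∧
        (br x (br a y) = 0 ∧ br (br a y) x = 0)) :
    derSeries br 3 = ⊥ := by
  have key := Stmt18Aux.Hgen br hright hleft hsq hCL
  have step1 : ∀ u ∈ derSeries br 1, ∀ v ∈ derSeries br 1, ∀ n ∈ derSeries br 2,
      br (br u v) n = 0 := by
    intro u hu v hv n hn
    rw [show (2 : ℕ) = 1 + 1 from rfl, Stmt18Aux.der_succ] at hn
    induction hn using Submodule.span_induction with
    | mem x hx =>
        obtain ⟨w, hw, z, hz, rfl⟩ := hx
        exact key u hu v hv w hw z hz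
    | zero => simp
    | add x y hx hy ihx ihy => rw [map_add, ihx, ihy, add_zero]
    | smul t x hx ih => rw [map_smul, ih, smul_zero]
  have step2 : ∀ m ∈ derSeries br 2, ∀ n ∈ derSeries br 2, br m n = 0 := by
    intro m hm
    rw [show (2 : ℕ) = 1 + 1 from rfl, Stmt18Aux.der_succ] at hm
    induction hm using Submodule.span_induction with
    | mem x hx =>
        obtain ⟨u, hu, v, hv, rfl⟩ := hx
        exact step1 u hu v hv
    | zero => intro n hn; simp
    | add x y hx hy ihx ihy =>
        intro n hn
        rw [map_add, LinearMap.add_apply, ihx n hn, ihy n hn, add_zero]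
    | smul t x hx ih =>
        intro n hn
        rw [map_smul, LinearMap.smul_apply, ih n hn, smul_zero]
  rw [show (3 : ℕ) = 2 + 1 from rfl, Stmt18Aux.der_succ, Submodule.span_eq_bot]
  rintro x ⟨m, hm, n, hn, rfl⟩
  exact step2 m hm n hn
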